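/- If D is a minimal counterexample, then D has no vertex all of whose incoming edges have the same colour, and no vertex all of whose outgoing edges have the same colour. -/

import Mathlib

/-- A 3-coloured tournament on vertex type `V`: between any two distinct
vertices there is exactly one directed edge (`beats`), and `colour x y` gives
the colour (one of three: red, blue, green) of the edge from `x` to `y`
(meaningful when `beats x y` holds). -/
structure CTournament (V : Type*) where
  beats : V → V → Prop
  irrefl : ∀ v, ¬ beats v v
  asymm : ∀ v w, beats v w → ¬ beats w v
  total : ∀ v w, v ≠ w → beats v w ∨ beats w v
  colour : V → V → Fin 3

namespace CTournament

/-- The colour red. -/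
def red : Fin 3 := 0
/-- The colour blue. -/
def blue : Fin 3 := 1
/-- The colour green. -/
def green : Fin 3 := 2

variable {V : Type*} (T : CTournament V)

/-- `x` monochromatically dominates `y` in colour `c`: there is a directed
path (with at least one edge) from `x` to `y` all of whose edges have
colour `c`. -/
def Dom (c : Fin 3) (x y : V) : Prop :=
  Relation.TransGen (fun a b => T.beats a b ∧ T.colour a b = c) x y

/-- `x` monochromatically dominates `y` (in some colour). -/
def MDom (x y : V) : Prop := ∃ c, T.Dom c x y

/-- `x` monochromatically dominates `y` in colour `c` within the
subtournament induced on the vertex set `S`. -/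
def DomIn (S : Set V) (c : Fin 3) (x y : V) : Prop :=
  Relation.TransGen (fun a b => a ∈ S ∧ b ∈ S ∧ T.beats a b ∧ T.colour a b = c) x y

/-- `x` monochromatically dominates `y` within the subtournament induced on `S`. -/
def MDomIn (S : Set V) (x y : V) : Prop := ∃ c, T.DomIn S c x y

/-- `T` contains a `T_3`: three vertices spanning a cyclic triangle whose
three edges have three pairwise distinct colours. -/
def HasT3 : Prop :=
  ∃ a b c : V, T.beats a b ∧ T.beats b c ∧ T.beats c a ∧
    T.colour a b ≠ T.colour b c ∧ T.colour b c ≠ T.colour c a ∧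
    T.colour a b ≠ T.colour c a

/-- Vertex `v` is incident with an edge of colour `c`. -/
def IncidentColour (v : V) (c : Fin 3) : Prop :=
  ∃ w, (T.beats v w ∧ T.colour v w = c) ∨ (T.beats w v ∧ T.colour w v = c)

/-- `T` is a minimal counterexample: it contains no `T_3`, no vertex
monochromatically dominates every other vertex, and every proper nonempty
subset of the vertices spans a subtournament containing a vertex that
monochromatically dominates (within that subtournament) every other vertex
of the subset. -/
def MinimalCex : Prop :=
  ¬ T.HasT3 ∧
  (¬ ∃ x : V, ∀ y, y ≠ x → T.MDom x y) ∧
  ∀ S : Set V, S.Nonempty → S ≠ Set.univ →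
    ∃ x ∈ S, ∀ y ∈ S, y ≠ x → T.MDomIn S x y

/-- The permutation `σ` (sending every vertex to its successor) is a directed
Hamilton cycle of `T`: every vertex beats its successor, and all vertices lie
on a single cycle of `σ`. -/
def IsHamCycle (σ : Equiv.Perm V) : Prop :=
  (∀ v, T.beats v (σ v)) ∧ ∀ v w : V, ∃ n : ℕ, (⇑σ)^[n] v = w

/-- The domination property of the Hamilton cycle `σ`: every vertex
monochromatically dominates every vertex other than itself and its
predecessor on the cycle, and no vertex monochromatically dominates its
predecessor. -/
def HamDomProp (σ : Equiv.Perm V) : Prop :=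
  (∀ x y : V, y ≠ x → y ≠ σ.symm x → T.MDom x y) ∧
  ∀ x : V, ¬ T.MDom x (σ.symm x)

/-- The vertex set of the directed subpath `xCy` of the Hamilton cycle whose
successor permutation is `σ`: all vertices reachable from `x` along the cycle
no later than the first visit of `y`. -/
def PathSet (σ : Equiv.Perm V) (x y : V) : Set V :=
  {z | ∃ k : ℕ, (⇑σ)^[k] x = z ∧ ∀ j < k, (⇑σ)^[j] x ≠ y}

/-- `R^+(x)`: the vertices to which `x` sends a red edge. -/
def Rplus (x : V) : Set V := {v | T.beats x v ∧ T.colour x v = red}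
/-- `R^-(x)`: the vertices from which `x` receives a red edge. -/
def Rminus (x : V) : Set V := {v | T.beats v x ∧ T.colour v x = red}
/-- `B^+(x)`: the vertices to which `x` sends a blue edge. -/
def Bplus (x : V) : Set V := {v | T.beats x v ∧ T.colour x v = blue}
/-- `B^-(x)`: the vertices from which `x` receives a blue edge. -/
def Bminus (x : V) : Set V := {v | T.beats v x ∧ T.colour v x = blue}
/-- `R_r^+(x) = {v ∈ R^+(x) : v monochromatically dominates x in red}`. -/
def Rrplus (x : V) : Set V := {v ∈ T.Rplus x | T.Dom red v x}
/-- `R_r^-(x) = {v ∈ R^-(x) : x monochromatically dominates v in red}`. -/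
def Rrminus (x : V) : Set V := {v ∈ T.Rminus x | T.Dom red x v}
/-- `B_b^+(x) = {v ∈ B^+(x) : v monochromatically dominates x in blue}`. -/
def Bbplus (x : V) : Set V := {v ∈ T.Bplus x | T.Dom blue v x}
/-- `B_b^-(x) = {v ∈ B^-(x) : x monochromatically dominates v in blue}`. -/
def Bbminus (x : V) : Set V := {v ∈ T.Bminus x | T.Dom blue x v}

end CTournament

namespace CTournament

variable {V : Type*}

private lemma beats_ne {T : CTournament V} {a b : V} (h : T.beats a b) : a ≠ b := by
  rintro rfl; exact T.irrefl _ h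

private lemma dom_last (T : CTournament V) {c : Fin 3} {x y : V} (h : T.Dom c x y) :
    ∃ t, T.beats t y ∧ T.colour t y = c := by
  induction h with
  | single h => exact ⟨_, h⟩
  | tail _ hbc _ => exact ⟨_, hbc⟩

private lemma dom_first (T : CTournament V) {c : Fin 3} {x y : V} (h : T.Dom c x y) :
    ∃ t, T.beats x t ∧ T.colour x t = c := by
  induction h with
  | single h => exact ⟨_, h⟩
  | tail _ _ ih => exact ih

private lemma mdom_of_mdomIn {T : CTournament V} {S : Set V} {x y : V}
    (h : T.MDomIn S x y) : T.MDom x y := by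
  obtain ⟨c, hc⟩ := h
  exact ⟨c, Relation.TransGen.mono (p := fun a b => T.beats a b ∧ T.colour a b = c) (fun a b hab => ⟨hab.2.2.1, hab.2.2.2⟩) x y hc⟩

/-- From minimality: for every `w` (with another vertex existing) there is a king of
`V \ {w}`:  a vertex `x` beaten by `w`, not dominating `w`, dominating all else. -/
private lemma king_compl (T : CTournament V) (h : T.MinimalCex) (w : V)
    (hw : ∃ y : V, y ≠ w) :
    ∃ x, T.beats w x ∧ ¬ T.MDom x w ∧ ∀ y, y ≠ w → y ≠ x → T.MDom x y := by
  obtain ⟨y0, hy0⟩ := hw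
  have h1 : ({w}ᶜ : Set V).Nonempty := ⟨y0, by simpa using hy0⟩
  have h2 : ({w}ᶜ : Set V) ≠ Set.univ := by
    intro hE
    have hwmem : w ∈ ({w}ᶜ : Set V) := hE.symm ▸ Set.mem_univ w
    simp at hwmem
  obtain ⟨x, hxS, hk⟩ := h.2.2 _ h1 h2
  have hxw : x ≠ w := by simpa using hxS
  have hdom : ∀ y, y ≠ w → y ≠ x → T.MDom x y := by
    intro y hyw hyx
    exact mdom_of_mdomIn (hk y (by simpa using hyw) hyx)
  have hnd : ¬ T.MDom x w := by
    intro hmd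
    refine h.2.1 ⟨x, fun y hy => ?_⟩
    by_cases hyw : y = w
    · exact hyw ▸ hmd
    · exact hdom y hyw hy
  have hbeats : T.beats w x := by
    rcases T.total w x (Ne.symm hxw) with hb | hb
    · exact hb
    · exact absurd ⟨T.colour x w, Relation.TransGen.single ⟨hb, rfl⟩⟩ hnd
  exact ⟨x, hbeats, hnd, hdom⟩

/-- The king map is injective, hence surjective; so every vertex `v` has a
"predecessor" `p` beating `v`, where `v` dominates everything except `p`. -/
private lemma exists_pred [Fintype V] (T : CTournament V) (h : T.MinimalCex)
    (hw : ∀ w : V, ∃ y, y ≠ w) (v : V) :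
    ∃ p, T.beats p v ∧ ¬ T.MDom v p ∧ ∀ y, y ≠ p → y ≠ v → T.MDom v y := by
  choose f hbeats hnd hdom using fun w => T.king_compl h w (hw w)
  have hinj : Function.Injective f := by
    intro a b hab
    by_contra hne
    have hbx : b ≠ f a := by
      intro hh
      apply T.irrefl b
      have hb := hbeats b
      rw [← hab, ← hh] at hb
      exact hb
    apply hnd b
    have := hdom a b (Ne.symm hne) hbx
    rwa [hab] at this
  have hsurj : Function.Surjective f := Finite.injective_iff_surjective.mp hinj
  obtain ⟨p, hp⟩ := hsurj v
  refine ⟨p, ?_, ?_, ?_⟩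
  · have := hbeats p; rwa [hp] at this
  · have := hnd p; rwa [hp] at this
  · intro y h1 h2
    have := hdom p y h1 (by rw [hp]; exact h2)
    rwa [hp] at this

private lemma no_in_star [Fintype V] (T : CTournament V) (h : T.MinimalCex) (v : V)
    (c : Fin 3) (hc : ∀ w, T.beats w v → T.colour w v = c) : False := by
  classical
  have hW2 : ∀ w : V, ∃ y, y ≠ w := by
    intro w
    by_contra hcon
    push_neg at hcon
    exact h.2.1 ⟨w, fun y hy => absurd (hcon y) hy⟩
  obtain ⟨u, hvu, hunv, hudom⟩ := T.king_compl h v (hW2 v)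
  obtain ⟨p, hpv, hvnp, _⟩ := T.exists_pred h hW2 v
  -- every monochromatic domination of `v` is in colour `c`
  have hlast : ∀ (e : Fin 3) (x : V), T.Dom e x v → e = c := by
    intro e x hx
    obtain ⟨t, ht, htc⟩ := T.dom_last hx
    rw [← htc]; exact hc t ht
  -- `v` has no outgoing edge of colour `c`
  have hnoc : ∀ z, T.beats v z → T.colour v z ≠ c := by
    intro z hvz hzc
    obtain ⟨x, _, hxnz, hxdom⟩ := T.king_compl h z (hW2 z)
    have hvz' : v ≠ z := beats_ne hvz
    have hxv : x ≠ v := by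
      rintro rfl
      exact hxnz ⟨c, Relation.TransGen.single ⟨hvz, hzc⟩⟩
    obtain ⟨e, he⟩ := hxdom v hvz' (Ne.symm hxv)
    obtain rfl := hlast e x he
    exact hxnz ⟨e, he.tail ⟨hvz, hzc⟩⟩
  have hpvne : p ≠ v := beats_ne hpv
  have hpu : p ≠ u := by rintro rfl; exact T.asymm _ _ hpv hvu
  obtain ⟨β, hβ⟩ := hudom p hpvne hpu
  have hcpv : T.colour p v = c := hc p hpv
  have hβc : β ≠ c := by
    intro hbc
    exact hunv ⟨c, (hbc ▸ hβ : T.Dom c u p).tail ⟨hpv, hcpv⟩⟩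
  -- walk along the β-path from u to p
  have hW : ∀ x, T.Dom β x p → T.beats v x → False := by
    intro x hx
    induction hx using Relation.TransGen.head_induction_on with
    | @single x hedge =>
      intro hvx
      by_cases hδβ : T.colour v x = β
      · exact hvnp ⟨β, Relation.TransGen.head ⟨hvx, hδβ⟩ (Relation.TransGen.single hedge)⟩
      · exact h.1 ⟨v, x, p, hvx, hedge.1, hpv,
          by rw [hedge.2]; exact hδβ,
          by rw [hedge.2, hcpv]; exact hβc,
          by rw [hcpv]; exact hnoc x hvx⟩
    | @head x x₁ h' htail ih =>
      intro hvx
      have hx₁v : x₁ ≠ v := by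
        rintro rfl
        exact hβc ((h'.2).symm.trans (hc x h'.1))
      rcases T.total v x₁ (Ne.symm hx₁v) with hv1 | h1v
      · exact ih hv1
      · by_cases hδβ : T.colour v x = β
        · exact hvnp ⟨β, Relation.TransGen.head ⟨hvx, hδβ⟩ (htail.head h')⟩
        · exact h.1 ⟨v, x, x₁, hvx, h'.1, h1v,
            by rw [h'.2]; exact hδβ,
            by rw [h'.2, hc x₁ h1v]; exact hβc,
            by rw [hc x₁ h1v]; exact hnoc x hvx⟩
  exact hW u hβ hvu

private lemma no_out_star [Fintype V] (T : CTournament V) (h : T.MinimalCex) (v : V)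
    (c : Fin 3) (hc : ∀ w, T.beats v w → T.colour v w = c) : False := by
  classical
  have hW2 : ∀ w : V, ∃ y, y ≠ w := by
    intro w
    by_contra hcon
    push_neg at hcon
    exact h.2.1 ⟨w, fun y hy => absurd (hcon y) hy⟩
  obtain ⟨u, hvu, hunv, hudom⟩ := T.king_compl h v (hW2 v)
  obtain ⟨p, hpv, hvnp, hvdom⟩ := T.exists_pred h hW2 v
  -- every monochromatic domination by `v` is in colour `c`
  have hfirst : ∀ (e : Fin 3) (y : V), T.Dom e v y → e = c := by
    intro e y hy
    obtain ⟨t, ht, htc⟩ := T.dom_first hy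
    rw [← htc]; exact hc t ht
  have hvdomc : ∀ y, y ≠ p → y ≠ v → T.Dom c v y := by
    intro y h1 h2
    obtain ⟨e, he⟩ := hvdom y h1 h2
    obtain rfl := hfirst e y he
    exact he
  have hpvne : p ≠ v := beats_ne hpv
  have hτc : T.colour p v ≠ c := by
    intro hτ
    refine h.2.1 ⟨p, fun y hy => ?_⟩
    by_cases hyv : y = v
    · exact hyv ▸ ⟨c, Relation.TransGen.single ⟨hpv, hτ⟩⟩
    · exact ⟨c, (Relation.TransGen.single ⟨hpv, hτ⟩).trans (hvdomc y hy hyv)⟩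
  -- no edge of colour `c` enters `p`
  have hnocp : ∀ s, T.beats s p → T.colour s p ≠ c := by
    intro s hs hsc
    have hsp : s ≠ p := beats_ne hs
    have hsv : s ≠ v := by
      rintro rfl
      exact hvnp ⟨c, Relation.TransGen.single ⟨hs, hsc⟩⟩
    exact hvnp ⟨c, (hvdomc s hsp hsv).tail ⟨hs, hsc⟩⟩
  have hpu : p ≠ u := by rintro rfl; exact T.asymm _ _ hpv hvu
  obtain ⟨d, hd⟩ := hudom p hpvne hpu
  have hdc : d ≠ c := by
    rintro rfl
    obtain ⟨t, ht, htc⟩ := T.dom_last hd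
    exact hnocp t ht htc
  -- walk along the d-path from u to p
  have hW : ∀ x, T.Dom d x p → T.beats v x → T.Dom d x v := by
    intro x hx
    induction hx using Relation.TransGen.head_induction_on with
    | @single x hedge =>
      intro hvx
      by_cases hτd : T.colour p v = d
      · exact (Relation.TransGen.single hedge : T.Dom d x p).tail ⟨hpv, hτd⟩
      · exact (h.1 ⟨v, x, p, hvx, hedge.1, hpv,
          by rw [hc x hvx, hedge.2]; exact fun hh => hdc hh.symm,
          by rw [hedge.2]; exact fun hh => hτd hh.symm,
          by rw [hc x hvx]; exact fun hh => hτc hh.symm⟩).elim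
    | @head x x₁ h' htail ih =>
      intro hvx
      have hx₁v : x₁ ≠ v := by
        rintro rfl
        exact hdc (hfirst d p htail)
      rcases T.total v x₁ (Ne.symm hx₁v) with hv1 | h1v
      · exact (ih hv1).head h'
      · by_cases hρd : T.colour x₁ v = d
        · exact (Relation.TransGen.single h' : T.Dom d x x₁).tail ⟨h1v, hρd⟩
        · by_cases hρc : T.colour x₁ v = c
          · -- then x₁ would be a global king
            exfalso
            refine h.2.1 ⟨x₁, fun y hy => ?_⟩
            by_cases hyv : y = v
            · exact hyv ▸ ⟨c, Relation.TransGen.single ⟨h1v, hρc⟩⟩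
            · by_cases hyp : y = p
              · exact hyp ▸ ⟨d, htail⟩
              · exact ⟨c, (Relation.TransGen.single ⟨h1v, hρc⟩).trans (hvdomc y hyp hyv)⟩
          · exact (h.1 ⟨v, x, x₁, hvx, h'.1, h1v,
              by rw [hc x hvx, h'.2]; exact fun hh => hdc hh.symm,
              by rw [h'.2]; exact fun hh => hρd hh.symm,
              by rw [hc x hvx]; exact fun hh => hρc hh.symm⟩).elim
  exact hunv ⟨d, hW u hd hvu⟩

end CTournament

/-- A minimal counterexample has no vertex all of whose incoming
edges have the same colour, and no vertex all of whose outgoing edges have the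
same colour. -/
theorem minimalCex_no_monochromatic_star {V : Type*} [Fintype V] (T : CTournament V)
    (h : T.MinimalCex) :
    (∀ v : V, ¬ ∃ c : Fin 3, ∀ w, T.beats w v → T.colour w v = c) ∧
    (∀ v : V, ¬ ∃ c : Fin 3, ∀ w, T.beats v w → T.colour v w = c) := by
  constructor
  · rintro v ⟨c, hc⟩
    exact T.no_in_star h v c hc
  · rintro v ⟨c, hc⟩
    exact T.no_out_star h v c hc
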